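/- Let H be a real Hilbert space, let T : H → H be nonexpansive with a fixed point z*, let (λ_j)_{j≥0} ⊆ (0,1], set τ_k := λ_k(1−λ_k), and define z^{k+1} = (1−λ_k) z^k + λ_k T(z^k) from z^0 ∈ H. If τ_k > 0 for all k, then for every k ≥ 0: ‖T z^k − z^k‖² ≤ ‖z^0 − z*‖² / (∑_{i=0}^k τ_i), and (∑_{i=⌈k/2⌉+1}^{k} τ_i)·‖T z^k − z^k‖² → 0 as k → ∞. In particular, if there is ε > 0 with τ_j ≥ ε for all j, then (k+1)·‖T z^k − z^k‖² → 0 as k → ∞. -/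

import Mathlib

open RealInnerProductSpace in
lemma aux_norm_id {H : Type*} [NormedAddCommGroup H] [InnerProductSpace ℝ H] (a b : H) (t : ℝ) :
    ‖(1-t)•a + t•b‖^2 = (1-t)*‖a‖^2 + t*‖b‖^2 - (t*(1-t))*‖a-b‖^2 := by
  rw [norm_add_sq_real, norm_sub_sq_real]
  simp only [norm_smul, mul_pow, sq_abs, Real.norm_eq_abs, real_inner_smul_left,
    real_inner_smul_right]
  ring

/-- Theorem 1 (convergence of averaged operators), part 4: for a nonexpansive
`T : H → H` with fixed point `z*`, `λ_k ∈ (0,1]`, `τ_k := λ_k(1−λ_k) > 0`, and KM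
iterates `z^{k+1} = (1−λ_k) z^k + λ_k T z^k`, we have for all `k`
`‖T z^k − z^k‖² ≤ ‖z^0 − z*‖² / ∑_{i=0}^k τ_i`, and
`(∑_{i=⌈k/2⌉+1}^k τ_i)·‖T z^k − z^k‖² → 0`; in particular if `τ_j ≥ ε > 0` for all `j`
then `(k+1)·‖T z^k − z^k‖² → 0`. -/
theorem km_iteration_fpr_rate
    {H : Type*} [NormedAddCommGroup H] [InnerProductSpace ℝ H] [CompleteSpace H]
    (T : H → H) (hT : ∀ x y : H, ‖T x - T y‖ ≤ ‖x - y‖)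
    (zstar : H) (hzstar : T zstar = zstar)
    (lam : ℕ → ℝ) (hlam : ∀ k, lam k ∈ Set.Ioc (0 : ℝ) 1)
    (htau : ∀ k, 0 < lam k * (1 - lam k))
    (z : ℕ → H) (hz : ∀ k, z (k + 1) = (1 - lam k) • z k + lam k • T (z k)) :
    (∀ k : ℕ, ‖T (z k) - z k‖ ^ 2 ≤
        ‖z 0 - zstar‖ ^ 2 / ∑ i ∈ Finset.range (k + 1), lam i * (1 - lam i)) ∧
    Filter.Tendsto
      (fun k : ℕ =>
        (∑ i ∈ Finset.Icc ((k + 1) / 2 + 1) k, lam i * (1 - lam i)) * ‖T (z k) - z k‖ ^ 2)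
      Filter.atTop (nhds 0) ∧
    ((∃ ε > (0 : ℝ), ∀ j, ε ≤ lam j * (1 - lam j)) →
      Filter.Tendsto (fun k : ℕ => ((k : ℝ) + 1) * ‖T (z k) - z k‖ ^ 2)
        Filter.atTop (nhds 0)) := by
  set τ : ℕ → ℝ := fun i => lam i * (1 - lam i) with hτ
  set r : ℕ → ℝ := fun k => ‖T (z k) - z k‖ with hr
  have hr0 : ∀ k, 0 ≤ r k := fun k => norm_nonneg _
  -- descent inequality
  have hdesc : ∀ k, ‖z (k+1) - zstar‖^2 + τ k * r k ^ 2 ≤ ‖z k - zstar‖^2 := by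
    intro k
    have hk := hlam k
    have key : z (k+1) - zstar
        = (1 - lam k) • (z k - zstar) + lam k • (T (z k) - zstar) := by
      rw [hz]; module
    have hB : ‖T (z k) - zstar‖ ≤ ‖z k - zstar‖ := by
      simpa [hzstar] using hT (z k) zstar
    have hid := aux_norm_id (z k - zstar) (T (z k) - zstar) (lam k)
    have hsub : (z k - zstar) - (T (z k) - zstar) = -(T (z k) - z k) := by abel
    rw [hsub, norm_neg] at hid
    rw [key, hid]
    have hB2 : ‖T (z k) - zstar‖^2 ≤ ‖z k - zstar‖^2 :=
      pow_le_pow_left₀ (norm_nonneg _) hB 2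
    have hmul := mul_le_mul_of_nonneg_left hB2 hk.1.le
    simp only [hτ, hr]
    linarith
  -- residual is nonincreasing
  have hrstep : ∀ k, r (k+1) ≤ r k := by
    intro k
    have hk := hlam k
    have key : T (z (k+1)) - z (k+1)
        = (T (z (k+1)) - T (z k)) + (1 - lam k) • (T (z k) - z k) := by
      rw [hz]; module
    have hd : z (k+1) - z k = lam k • (T (z k) - z k) := by rw [hz]; module
    have h1 : ‖T (z (k+1)) - T (z k)‖ ≤ lam k * r k := by
      calc ‖T (z (k+1)) - T (z k)‖ ≤ ‖z (k+1) - z k‖ := hT _ _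
        _ = lam k * r k := by
            rw [hd, norm_smul, Real.norm_eq_abs, abs_of_pos hk.1]
    calc r (k+1) = ‖(T (z (k+1)) - T (z k)) + (1 - lam k) • (T (z k) - z k)‖ := by
          simp only [hr]; rw [key]
      _ ≤ ‖T (z (k+1)) - T (z k)‖ + ‖(1 - lam k) • (T (z k) - z k)‖ := norm_add_le _ _
      _ ≤ lam k * r k + (1 - lam k) * r k := by
          rw [norm_smul, Real.norm_eq_abs, abs_of_nonneg (by linarith [hk.2])]
          exact add_le_add h1 le_rfl
      _ = r k := by ring
  have hrmono : ∀ i k, i ≤ k → r k ≤ r i :=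
    fun i k h => antitone_nat_of_succ_le hrstep h
  -- summed descent
  have hsum : ∀ n, (∑ i ∈ Finset.range n, τ i * r i ^ 2) + ‖z n - zstar‖^2
      ≤ ‖z 0 - zstar‖^2 := by
    intro n
    induction n with
    | zero => simp
    | succ n ih =>
        rw [Finset.sum_range_succ]
        have := hdesc n
        linarith
  have hsum' : ∀ n, (∑ i ∈ Finset.range n, τ i * r i ^ 2) ≤ ‖z 0 - zstar‖^2 := by
    intro n; have := hsum n; nlinarith [sq_nonneg ‖z n - zstar‖, norm_nonneg (z n - zstar)]
  -- Part 1
  have part1 : ∀ k : ℕ, r k ^ 2 ≤ ‖z 0 - zstar‖ ^ 2 / ∑ i ∈ Finset.range (k + 1), τ i := by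
    intro k
    have hS : 0 < ∑ i ∈ Finset.range (k + 1), τ i :=
      Finset.sum_pos (fun i _ => htau i) ⟨0, by simp⟩
    rw [le_div_iff₀ hS]
    calc r k ^ 2 * ∑ i ∈ Finset.range (k + 1), τ i
        = ∑ i ∈ Finset.range (k + 1), τ i * r k ^ 2 := by
          rw [Finset.mul_sum]; exact Finset.sum_congr rfl fun i _ => by ring
      _ ≤ ∑ i ∈ Finset.range (k + 1), τ i * r i ^ 2 := by
          refine Finset.sum_le_sum fun i hi => ?_
          have hik : i ≤ k := by simpa [Nat.lt_succ_iff] using Finset.mem_range.mp hi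
          exact mul_le_mul_of_nonneg_left
            (pow_le_pow_left₀ (hr0 k) (hrmono i k hik) 2) (htau i).le
      _ ≤ ‖z 0 - zstar‖ ^ 2 := hsum' (k + 1)
  -- partial sums converge
  set g : ℕ → ℝ := fun n => ∑ i ∈ Finset.range n, τ i * r i ^ 2 with hg
  have hgmono : Monotone g := by
    intro m n hmn
    exact Finset.sum_le_sum_of_subset_of_nonneg (Finset.range_subset_range.mpr hmn)
      (fun i _ _ => mul_nonneg (htau i).le (sq_nonneg _))
  have hgbdd : BddAbove (Set.range g) := ⟨‖z 0 - zstar‖^2, by rintro x ⟨n, rfl⟩; exact hsum' n⟩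
  obtain ⟨L, hL⟩ : ∃ L, Filter.Tendsto g Filter.atTop (nhds L) :=
    ⟨_, tendsto_atTop_ciSup hgmono hgbdd⟩
  -- the difference of tails tends to 0
  have hmid : Filter.Tendsto (fun k : ℕ => g (k + 1) - g ((k + 1) / 2 + 1))
      Filter.atTop (nhds 0) := by
    have h1 : Filter.Tendsto (fun k : ℕ => g (k + 1)) Filter.atTop (nhds L) :=
      hL.comp (Filter.tendsto_add_atTop_nat 1)
    have h2 : Filter.Tendsto (fun k : ℕ => g ((k + 1) / 2 + 1)) Filter.atTop (nhds L) := by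
      refine hL.comp ?_
      refine Filter.tendsto_atTop.2 fun b => Filter.eventually_atTop.2 ⟨2 * b, fun k hk => ?_⟩
      omega
    simpa using h1.sub h2
  -- part 2 bound
  have hfle : ∀ k : ℕ, (∑ i ∈ Finset.Icc ((k + 1) / 2 + 1) k, τ i) * r k ^ 2
      ≤ g (k + 1) - g ((k + 1) / 2 + 1) := by
    intro k
    set m := (k + 1) / 2 with hm
    have hmk : m + 1 ≤ k + 1 := by omega
    have hIcc : Finset.Icc (m + 1) k = Finset.Ico (m + 1) (k + 1) := by
      rw [Finset.Ico_add_one_right_eq_Icc]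
    have hdiff : g (k + 1) - g (m + 1) = ∑ i ∈ Finset.Ico (m + 1) (k + 1), τ i * r i ^ 2 :=
      (Finset.sum_Ico_eq_sub _ hmk).symm
    rw [hIcc, hdiff, Finset.sum_mul]
    refine Finset.sum_le_sum fun i hi => ?_
    have hik : i ≤ k := by
      have := (Finset.mem_Ico.mp hi).2; omega
    exact mul_le_mul_of_nonneg_left
      (pow_le_pow_left₀ (hr0 k) (hrmono i k hik) 2) (htau i).le
  have hfnn : ∀ k : ℕ, 0 ≤ (∑ i ∈ Finset.Icc ((k + 1) / 2 + 1) k, τ i) * r k ^ 2 := by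
    intro k
    exact mul_nonneg (Finset.sum_nonneg fun i _ => (htau i).le) (sq_nonneg _)
  have part2 : Filter.Tendsto
      (fun k : ℕ => (∑ i ∈ Finset.Icc ((k + 1) / 2 + 1) k, τ i) * r k ^ 2)
      Filter.atTop (nhds 0) :=
    squeeze_zero hfnn hfle hmid
  refine ⟨part1, part2, ?_⟩
  -- Part 3
  rintro ⟨ε, hε, hεle⟩
  have hconst : Filter.Tendsto
      (fun k : ℕ => (4 / ε) * ((∑ i ∈ Finset.Icc ((k + 1) / 2 + 1) k, τ i) * r k ^ 2))
      Filter.atTop (nhds 0) := by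
    simpa using part2.const_mul (4 / ε)
  refine squeeze_zero' ?_ ?_ hconst
  · exact Filter.Eventually.of_forall fun k =>
      mul_nonneg (by positivity) (sq_nonneg _)
  · refine Filter.eventually_atTop.2 ⟨3, fun k hk => ?_⟩
    set m := (k + 1) / 2 with hm
    have hcard : (Finset.Icc (m + 1) k).card = k - m := by
      rw [Nat.card_Icc]; omega
    have hsumτ : ε * ((k : ℝ) - m) ≤ ∑ i ∈ Finset.Icc (m + 1) k, τ i := by
      have : (Finset.Icc (m + 1) k).card • ε ≤ ∑ i ∈ Finset.Icc (m + 1) k, τ i :=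
        Finset.card_nsmul_le_sum _ _ _ fun i _ => hεle i
      rw [hcard, nsmul_eq_mul] at this
      have hcast : ((k - m : ℕ) : ℝ) = (k : ℝ) - m := by
        have : m ≤ k := by omega
        push_cast [this]; ring
      rw [hcast] at this; linarith
    have hkm : (k : ℝ) + 1 ≤ 4 * ((k : ℝ) - m) := by
      have h1 : k + 1 ≤ 4 * (k - m) := by omega
      have h2 : m ≤ k := by omega
      calc (k : ℝ) + 1 = ((k + 1 : ℕ) : ℝ) := by push_cast; ring
        _ ≤ ((4 * (k - m) : ℕ) : ℝ) := by exact_mod_cast h1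
        _ = 4 * ((k : ℝ) - m) := by push_cast [h2]; ring
    have h2 := sq_nonneg (r k)
    have h3 : ε * ((k : ℝ) - m) * r k ^ 2 ≤ (∑ i ∈ Finset.Icc (m + 1) k, τ i) * r k ^ 2 :=
      mul_le_mul_of_nonneg_right hsumτ h2
    rw [div_mul_eq_mul_div, le_div_iff₀ hε]
    show ((k:ℝ) + 1) * r k ^ 2 * ε ≤ 4 * ((∑ i ∈ Finset.Icc (m + 1) k, τ i) * r k ^ 2)
    nlinarith [mul_le_mul_of_nonneg_right hkm h2, h3, hε.le]
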